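/- Let Γ and G be groups and f : Γ → G any map, with defect set D_f. Then every element of the subgroup of G generated by f(Γ) normalizes the subgroup of G generated by D_f; that is, for every w in the subgroup generated by f(Γ), w⁻¹ ⟨D_f⟩ w = ⟨D_f⟩. -/

import Mathlib

/-- The defect set of a map `f : Γ → G`:
`D_f = { f(y)⁻¹ f(x)⁻¹ f(xy) : x, y ∈ Γ }`. -/
def defectSet {Γ G : Type*} [Group Γ] [Group G] (f : Γ → G) : Set G :=
  {d | ∃ x y : Γ, d = (f y)⁻¹ * (f x)⁻¹ * f (x * y)}

lemma conj_defect_mem {Γ G : Type*} [Group Γ] [Group G] (f : Γ → G) (a : Γ) {d : G}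
    (hd : d ∈ defectSet f) :
    (f a)⁻¹ * d * f a ∈ Subgroup.closure (defectSet f) := by
  obtain ⟨x, y, rfl⟩ := hd
  have key : (f a)⁻¹ * ((f y)⁻¹ * (f x)⁻¹ * f (x * y)) * f a =
      ((f a)⁻¹ * (f y)⁻¹ * f (y * a)) * ((f (y * a))⁻¹ * (f x)⁻¹ * f (x * (y * a))) *
        ((f a)⁻¹ * (f (x * y))⁻¹ * f (x * y * a))⁻¹ := by
    rw [mul_assoc x y a]
    group
  rw [key]
  exact mul_mem (mul_mem (Subgroup.subset_closure ⟨y, a, rfl⟩)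
    (Subgroup.subset_closure ⟨x, y * a, rfl⟩))
    (inv_mem (Subgroup.subset_closure ⟨x * y, a, rfl⟩))

lemma conj_mem_closure {Γ G : Type*} [Group Γ] [Group G] (f : Γ → G) (a : Γ) {g : G}
    (hg : g ∈ Subgroup.closure (defectSet f)) :
    (f a)⁻¹ * g * f a ∈ Subgroup.closure (defectSet f) := by
  set N := Subgroup.closure (defectSet f)
  have : N.map (MulAut.conj ((f a)⁻¹)).toMonoidHom ≤ N := by
    rw [show N = Subgroup.closure (defectSet f) from rfl, MonoidHom.map_closure,
      Subgroup.closure_le]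
    rintro z ⟨d, hd, rfl⟩
    simpa [MulAut.conj, mul_assoc] using conj_defect_mem f a hd
  have h := this ⟨g, hg, rfl⟩
  simpa [MulAut.conj, mul_assoc] using h

lemma one_mem_cl {Γ G : Type*} [Group Γ] [Group G] (f : Γ → G) :
    f 1 ∈ Subgroup.closure (defectSet f) := by
  have : (f 1)⁻¹ ∈ defectSet f := ⟨1, 1, by group⟩
  simpa using inv_mem (Subgroup.subset_closure this)

lemma conj_mem_closure' {Γ G : Type*} [Group Γ] [Group G] (f : Γ → G) (a : Γ) {g : G}
    (hg : g ∈ Subgroup.closure (defectSet f)) :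
    f a * g * (f a)⁻¹ ∈ Subgroup.closure (defectSet f) := by
  set N := Subgroup.closure (defectSet f)
  set d0 : G := (f a⁻¹)⁻¹ * (f a)⁻¹ * f (a * a⁻¹) with hd0
  have hd0mem : d0 ∈ N := Subgroup.subset_closure ⟨a, a⁻¹, rfl⟩
  have key : f a * g * (f a)⁻¹ =
      f 1 * d0⁻¹ * ((f a⁻¹)⁻¹ * g * f a⁻¹) * d0 * (f 1)⁻¹ := by
    rw [hd0, mul_inv_cancel a]
    group
  rw [key]
  exact mul_mem (mul_mem (mul_mem (mul_mem (one_mem_cl f) (inv_mem hd0mem))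
    (conj_mem_closure f a⁻¹ hg)) hd0mem) (inv_mem (one_mem_cl f))

/-- Every element of the subgroup generated by `f(Γ)` normalizes the subgroup
generated by the defect set `D_f`. -/
theorem image_normalizes_defect_subgroup {Γ G : Type*} [Group Γ] [Group G]
    (f : Γ → G) (w : G) (hw : w ∈ Subgroup.closure (Set.range f)) :
    (fun x => w⁻¹ * x * w) '' (Subgroup.closure (defectSet f) : Set G) =
      (Subgroup.closure (defectSet f) : Set G) := by
  set N := Subgroup.closure (defectSet f)
  have hnorm : w ∈ Subgroup.normalizer (N : Set G) := by
    have hle : Subgroup.closure (Set.range f) ≤ Subgroup.normalizer (N : Set G) := by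
      rw [Subgroup.closure_le]
      rintro _ ⟨a, rfl⟩
      rw [SetLike.mem_coe, Subgroup.mem_normalizer_iff]
      intro h
      constructor
      · exact fun hh => conj_mem_closure' f a hh
      · intro hh
        have := conj_mem_closure f a hh
        have e : (f a)⁻¹ * (f a * h * (f a)⁻¹) * f a = h := by group
        rwa [e] at this
    exact hle hw
  have hnorm' : w⁻¹ ∈ Subgroup.normalizer (N : Set G) := inv_mem hnorm
  ext g
  simp only [Set.mem_image]
  constructor
  · rintro ⟨n, hn, rfl⟩
    have hn' : n ∈ N := hn
    have := (Subgroup.mem_normalizer_iff.mp hnorm' n).mp hn'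
    simpa [mul_assoc] using this
  · intro hg
    have hg' : g ∈ N := hg
    have h2 : w * g * w⁻¹ ∈ N := (Subgroup.mem_normalizer_iff.mp hnorm g).mp hg'
    exact ⟨w * g * w⁻¹, h2, by group⟩
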